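/- arXiv:1611.08244 — 3 statements merged into one kernel-verified Lean document; each statement's English description precedes it below -/
import Mathlib

section
/- Let k ≥ 4 be an integer, set N = (k² + k)/2 and A = (N − k + 1)(k + 1). Suppose B : ℕ → ℕ satisfies B(0) = 0, B(i) = i for 1 ≤ i ≤ N − 1, and B(n) = ∑_{i=1}^k B(n − B(n−i)) for all n with N ≤ n ≤ N + A + k. Then B(N + A + k − 1) = N + (N − k + 1)k + k − 3 and B(N + A + k) = N + (N − k + 1)k + k − 1. -/
set_option maxHeartbeats 1000000
set_option linter.all false

open Finset

lemma gauss_icc (k : ℕ) : (∑ i ∈ Finset.Icc 1 k, i) * 2 = k * (k+1) := by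
  induction k with
  | zero => simp
  | succ n ih => rw [Finset.sum_Icc_succ_top (by omega)]; nlinarith [ih]

lemma sum_div_window (k : ℕ) : ∀ c : ℕ, ∑ t ∈ Finset.range (k+1), (c+t)/(k+1) = c := by
  intro c
  induction c with
  | zero =>
    apply Finset.sum_eq_zero
    intro t ht
    simp only [Finset.mem_range] at ht
    exact Nat.div_eq_of_lt (by omega)
  | succ c ih =>
    have h1 : ∑ t ∈ Finset.range (k+2), (c+t)/(k+1)
        = (∑ t ∈ Finset.range (k+1), (c+t)/(k+1)) + (c+(k+1))/(k+1) :=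
      Finset.sum_range_succ _ _
    have h2 : ∑ t ∈ Finset.range (k+2), (c+t)/(k+1)
        = (∑ t ∈ Finset.range (k+1), (c+(t+1))/(k+1)) + (c+0)/(k+1) :=
      Finset.sum_range_succ' _ _
    have h3 : ∑ t ∈ Finset.range (k+1), (c+(t+1))/(k+1)
        = ∑ t ∈ Finset.range (k+1), (c+1+t)/(k+1) := by
      apply Finset.sum_congr rfl; intro t _; congr 1; omega
    have h4 : (c+(k+1))/(k+1) = c/(k+1) + 1 := Nat.add_div_right _ (by omega)
    simp only [Nat.add_zero] at h2
    omega

lemma ceil_div (k x : ℕ) : x/(k+1) + min (x % (k+1)) 1 = (x+k)/(k+1) := by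
  obtain ⟨q, r, hr, rfl⟩ : ∃ q r, r < k+1 ∧ x = (k+1)*q + r :=
    ⟨x/(k+1), x % (k+1), Nat.mod_lt _ (by omega), ((Nat.div_add_mod x (k+1)).symm)⟩
  rw [Nat.mul_add_div (by omega), Nat.mul_add_mod, Nat.div_eq_of_lt hr, Nat.mod_eq_of_lt hr]
  have e : (k+1)*q + r + k = (k+1)*q + (r+k) := by omega
  rw [e, Nat.mul_add_div (by omega)]
  rcases Nat.eq_zero_or_pos r with h0 | h0
  · subst h0; rw [Nat.div_eq_of_lt (by omega)]; simp
  · have h1 : (r+k)/(k+1) = 1 := by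
      have := Nat.div_eq_of_lt_le (by omega : 1*(k+1) ≤ r+k) (by omega : r+k < (1+1)*(k+1))
      simpa using this
    omega

lemma sum_h (k j : ℕ) :
    ∑ i ∈ Finset.Icc 1 k, ((j-i)/(k+1) + min ((j-i) % (k+1)) 1)
      = (j/(k+1))*k + (j % (k+1) - 1) := by
  have h1 : ∀ i ∈ Finset.Icc 1 k,
      (j-i)/(k+1) + min ((j-i) % (k+1)) 1 = (j+k-i)/(k+1) := by
    intro i hi
    simp only [Finset.mem_Icc] at hi
    rcases le_or_gt i j with h | h
    · have e : j + k - i = (j - i) + k := by omega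
      rw [e, ← ceil_div]
    · have h0 : j - i = 0 := by omega
      rw [h0]
      simp only [Nat.zero_div, Nat.zero_mod, Nat.zero_min, Nat.add_zero]
      exact (Nat.div_eq_of_lt (by omega)).symm
  rw [Finset.sum_congr rfl h1]
  have h2 : ∑ i ∈ Finset.Icc 1 k, (j+k-i)/(k+1) = ∑ t ∈ Finset.range k, (j + t)/(k+1) := by
    rw [← Finset.Ico_add_one_right_eq_Icc, Finset.sum_Ico_eq_sum_range]
    have e : k + 1 - 1 = k := by omega
    rw [e, ← Finset.sum_range_reflect]
    apply Finset.sum_congr rfl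
    intro t ht
    simp only [Finset.mem_range] at ht
    congr 1
    omega
  rw [h2]
  have h3 := sum_div_window k j
  rw [Finset.sum_range_succ] at h3
  have h4 := Nat.div_add_mod j (k+1)
  have h5 : j % (k+1) < k+1 := Nat.mod_lt _ (by omega)
  have h6 : (j+k)/(k+1) = j/(k+1) + min (j % (k+1)) 1 := (ceil_div k j).symm
  have h7 : (k+1)*(j/(k+1)) = (j/(k+1))*k + j/(k+1) := by ring
  omega

lemma main_formula
    (k N A : ℕ) (hk : 4 ≤ k) (h2N : 2*N = k^2 + k) (hNk : 2*k + 2 ≤ N)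
    (hA : A = (N - k + 1)*(k+1)) (B : ℕ → ℕ)
    (hinit : ∀ i, 1 ≤ i → i ≤ N - 1 → B i = i)
    (hrec : ∀ n, N ≤ n → n ≤ N + A + k →
      B n = ∑ i ∈ Finset.Icc 1 k, B (n - B (n - i))) :
    ∀ j, j < A → B (N + j) = N + (j/(k+1))*k + (j % (k+1) - 1) := by
  obtain ⟨D, hD⟩ : ∃ D, N = D + k := ⟨N - k, by omega⟩
  have hDk : k + 2 ≤ D := by omega
  have hA' : A = D*(k+1) + (k+1) := by rw [hA]; have : N - k + 1 = D + 1 := by omega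
                                       rw [this]; ring
  intro j
  induction j using Nat.strong_induction_on with
  | _ j IH =>
  intro hj
  rw [hrec (N+j) (by omega) (by omega)]
  have hterm : ∀ i ∈ Finset.Icc 1 k,
      B (N + j - B (N + j - i)) = i + ((j-i)/(k+1) + min ((j-i) % (k+1)) 1) := by
    intro i hi
    simp only [Finset.mem_Icc] at hi
    rcases le_or_gt i j with hij | hij
    · -- i ≤ j
      have e1 : N + j - i = N + (j - i) := by omega
      have hBni : B (N + j - i) = N + ((j-i)/(k+1))*k + ((j-i) % (k+1) - 1) := by
        rw [e1]; exact IH _ (by omega) (by omega)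
      obtain ⟨q, r, hrk, hdm, hq, hr⟩ :
          ∃ q r, r < k+1 ∧ (k+1)*q + r = j - i ∧ (j-i)/(k+1) = q ∧ (j-i) % (k+1) = r :=
        ⟨_, _, Nat.mod_lt _ (by omega), Nat.div_add_mod _ _, rfl, rfl⟩
      rw [hq, hr] at hBni ⊢
      have hlink : (k+1)*q = q*k + q := by ring
      have hm : N + j - B (N + j - i) = i + q + min r 1 := by
        rw [hBni]; omega
      have hqD : q ≤ D := by
        by_contra h
        push_neg at h
        have h2 : (D+1)*(k+1) ≤ (k+1)*q := by
          calc (D+1)*(k+1) ≤ q*(k+1) := Nat.mul_le_mul_right (k+1) h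
          _ = (k+1)*q := by ring
        have h3 : (D+1)*(k+1) = D*(k+1) + (k+1) := by ring
        omega
      have hmN : i + q + min r 1 ≤ N := by
        rcases Nat.lt_or_ge q D with hqlt | hqge
        · omega
        · have hqd : q = D := by omega
          have hl2 : (k+1)*q = D*(k+1) := by rw [hqd]; ring
          omega
      have hBm : B (i + q + min r 1) = i + q + min r 1 := by
        rcases Nat.lt_or_ge (i + q + min r 1) N with h | h
        · exact hinit _ (by omega) (by omega)
        · have hmN' : i + q + min r 1 = N := by omega
          have h0 := IH 0 (by omega) (by omega)
          simp only [Nat.add_zero, Nat.zero_div, Nat.zero_mod, Nat.zero_mul, Nat.zero_sub,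
            Nat.add_zero] at h0
          rw [hmN', h0]
      rw [hm, hBm]
      omega
    · -- i > j
      have e1 : N + j - i = N - (i - j) := by omega
      have hB1 : B (N + j - i) = N - (i - j) := by
        rw [e1]; exact hinit _ (by omega) (by omega)
      have e2 : N + j - B (N+j-i) = i := by rw [hB1]; omega
      have e3 : j - i = 0 := by omega
      rw [e2, e3]
      rw [hinit i (by omega) (by omega)]
      simp
  rw [Finset.sum_congr rfl hterm, Finset.sum_add_distrib, sum_h k j]
  have hg := gauss_icc k
  have hkk : k*(k+1) = k^2 + k := by ring
  generalize (j/(k+1))*k = X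
  generalize j % (k+1) = y
  omega

lemma end_E
    (k N A : ℕ) (hk : 4 ≤ k) (h2N : 2*N = k^2 + k) (hNk : 2*k + 2 ≤ N)
    (hA : A = (N - k + 1)*(k+1)) (B : ℕ → ℕ)
    (hinit : ∀ i, 1 ≤ i → i ≤ N - 1 → B i = i)
    (hrec : ∀ n, N ≤ n → n ≤ N + A + k →
      B n = ∑ i ∈ Finset.Icc 1 k, B (n - B (n - i)))
    (hmain : ∀ j, j < A → B (N + j) = N + (j/(k+1))*k + (j % (k+1) - 1)) :
    ∀ t, t ≤ k - 2 → B (N + A + t) + 1 = N + (N - k + 1)*k + t := by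
  obtain ⟨D, hD⟩ : ∃ D, N = D + k := ⟨N - k, by omega⟩
  have hDk : k + 2 ≤ D := by omega
  have hA' : A = D*(k+1) + (k+1) := by
    rw [hA]; have e : N - k + 1 = D + 1 := by omega
    rw [e]; ring
  have hA2 : A = (D+1)*k + (D+1) := by rw [hA']; ring
  have hA3 : A = D*k + D + k + 1 := by rw [hA']; ring
  have hXk : (N - k + 1)*k = (D+1)*k := by
    have e : N - k + 1 = D + 1 := by omega
    rw [e]
  have hBid : ∀ m, 1 ≤ m → m ≤ N → B m = m := by
    intro m h1 h2
    rcases Nat.lt_or_ge m N with h | h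
    · exact hinit _ (by omega) (by omega)
    · have hm : m = N := by omega
      have h0 := hmain 0 (by omega)
      simp only [Nat.add_zero, Nat.zero_div, Nat.zero_mod, Nat.zero_mul, Nat.zero_sub,
        Nat.add_zero] at h0
      rw [hm, h0]
  have hBN1 : B (N + 1) = N := by
    have h1 := hmain 1 (by omega)
    rw [Nat.div_eq_of_lt (by omega), Nat.mod_eq_of_lt (by omega)] at h1
    simpa using h1
  have hfA : ∀ d, 1 ≤ d → d ≤ k → B (N + (A - d)) = N + D*k + (k - d) := by
    intro d h1 h2
    have hlk : (k+1)*D = D*(k+1) := by ring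
    have e : A - d = (k+1)*D + (k+1-d) := by omega
    have hdiv : (A-d)/(k+1) = D := by
      rw [e, Nat.mul_add_div (by omega), Nat.div_eq_of_lt (by omega)]
      omega
    have hmod : (A-d) % (k+1) = k+1-d := by
      rw [e, Nat.mul_add_mod]; exact Nat.mod_eq_of_lt (by omega)
    rw [hmain (A-d) (by omega), hdiv, hmod]
    omega
  intro t
  induction t using Nat.strong_induction_on with
  | _ t IH =>
  intro ht
  rw [hrec (N+A+t) (by omega) (by omega)]
  have hterm : ∀ i ∈ Finset.Icc 1 k,
      B (N+A+t - B (N+A+t-i)) + (if i = k then 1 else 0)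
        = (D+1+i) + (if i ≤ t then 1 else 0) := by
    intro i hi
    simp only [Finset.mem_Icc] at hi
    rcases le_or_gt i t with hit | hit
    · -- i ≤ t
      have e1 : N+A+t-i = N+A+(t-i) := by omega
      have hBv := IH (t-i) (by omega) (by omega)
      have hm : N+A+t - B (N+A+t-i) = D+2+i := by
        rw [e1]; omega
      rw [hm, hBid (D+2+i) (by omega) (by omega), if_pos hit, if_neg (by omega)]
      omega
    · -- t < i
      have e1 : N+A+t-i = N + (A - (i-t)) := by omega
      have hBv := hfA (i-t) (by omega) (by omega)
      have hm : N+A+t - B (N+A+t-i) = D+1+i := by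
        rw [e1, hBv]; omega
      rcases Nat.lt_or_ge i k with hik | hik
      · rw [hm, hBid (D+1+i) (by omega) (by omega), if_neg (by omega), if_neg (by omega)]
      · have hik' : i = k := by omega
        have e2 : D+1+i = N+1 := by omega
        rw [hm, e2, hBN1, if_pos hik', if_neg (by omega)]
  have hsum := Finset.sum_congr rfl hterm
  rw [Finset.sum_add_distrib, Finset.sum_add_distrib] at hsum
  have c1 : (∑ i ∈ Finset.Icc 1 k, if i = k then 1 else 0) = 1 := by
    rw [Finset.sum_ite_eq' (Finset.Icc 1 k) k (fun _ => (1:ℕ))]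
    rw [if_pos (by simp [Finset.mem_Icc]; omega)]
  have c2 : (∑ i ∈ Finset.Icc 1 k, if i ≤ t then 1 else 0) = t := by
    rw [← Finset.sum_filter]
    have e : (Finset.Icc 1 k).filter (fun i => i ≤ t) = Finset.Icc 1 t := by
      ext x; simp only [Finset.mem_filter, Finset.mem_Icc]; omega
    rw [e, Finset.sum_const, Nat.card_Icc]
    simp
  have c3 : (∑ i ∈ Finset.Icc 1 k, (D+1+i)) = k*(D+1) + N := by
    rw [Finset.sum_add_distrib, Finset.sum_const, Nat.card_Icc, smul_eq_mul]
    have hg := gauss_icc k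
    have hkk : k*(k+1) = k^2+k := by ring
    have e : (k+1-1) * (D+1) = k*(D+1) := by congr 1
    omega
  have hlast : k*(D+1) = (D+1)*k := by ring
  omega

lemma step_V1
    (k N A D : ℕ) (hk : 4 ≤ k) (hD : N = D + k) (hDk : k + 2 ≤ D)
    (hA2 : A = (D+1)*k + (D+1)) (hA3 : A = D*k + D + k + 1)
    (hXk : (N - k + 1)*k = (D+1)*k)
    (B : ℕ → ℕ)
    (hrec : ∀ n, N ≤ n → n ≤ N + A + k →
      B n = ∑ i ∈ Finset.Icc 1 k, B (n - B (n - i)))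
    (hE : ∀ t, t ≤ k - 2 → B (N + A + t) + 1 = N + (N - k + 1)*k + t)
    (hBid : ∀ m, 1 ≤ m → m ≤ N → B m = m)
    (hBN1 : B (N + 1) = N)
    (hfA : ∀ d, 1 ≤ d → d ≤ k → B (N + (A - d)) = N + D*k + (k - d))
    (hgauss : (∑ i ∈ Finset.Icc 1 k, i) = N) :
    B (N + A + (k-1)) = N + (D+1)*k + k - 3 := by
  rw [hrec (N+A+(k-1)) (by omega) (by omega)]
  have hterm : ∀ i ∈ Finset.Icc 1 k,
      B (N+A+(k-1) - B (N+A+(k-1)-i)) + (if i = k-1 then 1 else 0)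
        + (if i = k then 2 else 0) = D+2+i := by
    intro i hi
    clear hrec hgauss
    simp only [Finset.mem_Icc] at hi
    have hcase : i ≤ k-2 ∨ i = k-1 ∨ i = k := by omega
    rcases hcase with hc | hc | hc
    · have e1 : N+A+(k-1)-i = N+A+(k-1-i) := by omega
      have hBv := hE (k-1-i) (by omega)
      have hm : N+A+(k-1) - B (N+A+(k-1)-i) = D+2+i := by
        rw [e1]; clear hE hBid hfA; omega
      rw [hm, hBid (D+2+i) (by omega) (by omega), if_neg (by omega), if_neg (by omega)]
      omega
    · have e1 : N+A+(k-1)-i = N+A+0 := by omega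
      have hBv := hE 0 (by omega)
      have hm : N+A+(k-1) - B (N+A+(k-1)-i) = N+1 := by
        rw [e1]; clear hE hBid hfA; omega
      rw [hm, hBN1, if_pos hc, if_neg (by omega)]
      omega
    · have e1 : N+A+(k-1)-i = N+(A-1) := by omega
      have hBv := hfA 1 (by omega) (by omega)
      have hm : N+A+(k-1) - B (N+A+(k-1)-i) = N+1 := by
        rw [e1, hBv]; clear hE hBid hfA; omega
      rw [hm, hBN1, if_neg (by omega), if_pos hc]
      omega
  have csum : (∑ i ∈ Finset.Icc 1 k, (D+2+i)) = k*(D+2) + N := by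
    rw [Finset.sum_add_distrib, Finset.sum_const, Nat.card_Icc, smul_eq_mul, hgauss]
    have e : (k+1-1) * (D+2) = k*(D+2) := by congr 1
    omega
  have cK : (∑ i ∈ Finset.Icc 1 k, if i = k then 2 else 0) = 2 := by
    rw [Finset.sum_ite_eq' (Finset.Icc 1 k) k (fun _ => (2:ℕ))]
    rw [if_pos (by simp [Finset.mem_Icc]; omega)]
  have cK1 : (∑ i ∈ Finset.Icc 1 k, if i = k-1 then 1 else 0) = 1 := by
    rw [Finset.sum_ite_eq' (Finset.Icc 1 k) (k-1) (fun _ => (1:ℕ))]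
    rw [if_pos (by simp [Finset.mem_Icc]; omega)]
  have hsum := Finset.sum_congr rfl hterm
  rw [Finset.sum_add_distrib, Finset.sum_add_distrib, cK1, cK, csum] at hsum
  clear hE hBid hfA csum cK cK1 hterm
  have hl : k*(D+2) = (D+1)*k + k := by ring
  omega

lemma step_V2
    (k N A D : ℕ) (hk : 4 ≤ k) (hD : N = D + k) (hDk : k + 2 ≤ D)
    (hA2 : A = (D+1)*k + (D+1)) (hA3 : A = D*k + D + k + 1)
    (hXk : (N - k + 1)*k = (D+1)*k)
    (B : ℕ → ℕ)
    (hrec : ∀ n, N ≤ n → n ≤ N + A + k →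
      B n = ∑ i ∈ Finset.Icc 1 k, B (n - B (n - i)))
    (hE : ∀ t, t ≤ k - 2 → B (N + A + t) + 1 = N + (N - k + 1)*k + t)
    (hBid : ∀ m, 1 ≤ m → m ≤ N → B m = m)
    (hBN1 : B (N + 1) = N)
    (hBN2 : B (N + 2) = N + 1)
    (hV1 : B (N + A + (k-1)) = N + (D+1)*k + k - 3)
    (hgauss : (∑ i ∈ Finset.Icc 1 k, i) = N) :
    B (N + A + k) = N + (D+1)*k + k - 1 := by
  rw [hrec (N+A+k) (by omega) (by omega)]
  have hterm : ∀ i ∈ Finset.Icc 1 k,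
      B (N+A+k - B (N+A+k-i)) + (if i = k-1 then 1 else 0)
        + (if i = k then 1 else 0) = (D+2+i) + (if i = 1 then 1 else 0) := by
    intro i hi
    clear hrec hgauss
    simp only [Finset.mem_Icc] at hi
    have hcase : i = 1 ∨ (2 ≤ i ∧ i ≤ k-2) ∨ i = k-1 ∨ i = k := by omega
    rcases hcase with hc | hc | hc | hc
    · have e1 : N+A+k-i = N+A+(k-1) := by omega
      have hm : N+A+k - B (N+A+k-i) = D+4 := by
        rw [e1, hV1]; clear hE hBid; omega
      rw [hm, hBid (D+4) (by omega) (by omega), if_neg (by omega), if_neg (by omega),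
        if_pos hc]
      omega
    · have e1 : N+A+k-i = N+A+(k-i) := by omega
      have hBv := hE (k-i) (by omega)
      have hm : N+A+k - B (N+A+k-i) = D+2+i := by
        rw [e1]; clear hE hBid; omega
      rw [hm, hBid (D+2+i) (by omega) (by omega), if_neg (by omega), if_neg (by omega),
        if_neg (by omega)]
    · have e1 : N+A+k-i = N+A+1 := by omega
      have hBv := hE 1 (by omega)
      have hm : N+A+k - B (N+A+k-i) = N+1 := by
        rw [e1]; clear hE hBid; omega
      rw [hm, hBN1, if_pos hc, if_neg (by omega), if_neg (by omega)]
      omega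
    · have e1 : N+A+k-i = N+A+0 := by omega
      have hBv := hE 0 (by omega)
      have hm : N+A+k - B (N+A+k-i) = N+2 := by
        rw [e1]; clear hE hBid; omega
      rw [hm, hBN2, if_neg (by omega), if_pos hc, if_neg (by omega)]
      omega
  have csum : (∑ i ∈ Finset.Icc 1 k, (D+2+i)) = k*(D+2) + N := by
    rw [Finset.sum_add_distrib, Finset.sum_const, Nat.card_Icc, smul_eq_mul, hgauss]
    have e : (k+1-1) * (D+2) = k*(D+2) := by congr 1
    omega
  have cK : (∑ i ∈ Finset.Icc 1 k, if i = k then 1 else 0) = 1 := by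
    rw [Finset.sum_ite_eq' (Finset.Icc 1 k) k (fun _ => (1:ℕ))]
    rw [if_pos (by simp [Finset.mem_Icc]; omega)]
  have cK1 : (∑ i ∈ Finset.Icc 1 k, if i = k-1 then 1 else 0) = 1 := by
    rw [Finset.sum_ite_eq' (Finset.Icc 1 k) (k-1) (fun _ => (1:ℕ))]
    rw [if_pos (by simp [Finset.mem_Icc]; omega)]
  have c1' : (∑ i ∈ Finset.Icc 1 k, if i = 1 then 1 else 0) = 1 := by
    rw [Finset.sum_ite_eq' (Finset.Icc 1 k) 1 (fun _ => (1:ℕ))]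
    rw [if_pos (by simp [Finset.mem_Icc]; omega)]
  have hsum := Finset.sum_congr rfl hterm
  rw [Finset.sum_add_distrib, Finset.sum_add_distrib, Finset.sum_add_distrib, cK1, cK,
    csum, c1'] at hsum
  clear hE hBid csum cK cK1 c1' hterm
  have hl : k*(D+2) = (D+1)*k + k := by ring
  omega

/-- with `k ≥ 4`, `N = (k²+k)/2`, `A = (N−k+1)(k+1)`, and `B` satisfying the
initial condition and the `B_k`-recurrence for `N ≤ n ≤ N + A + k`:
`B (N + A + k − 1) = N + (N−k+1)k + k − 3` and `B (N + A + k) = N + (N−k+1)k + k − 1`. -/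
theorem stmt_15 (k N A : ℕ) (hk : 4 ≤ k) (hN : N = (k ^ 2 + k) / 2)
    (hA : A = (N - k + 1) * (k + 1)) (B : ℕ → ℕ)
    (hB0 : B 0 = 0)
    (hinit : ∀ i, 1 ≤ i → i ≤ N - 1 → B i = i)
    (hrec : ∀ n, N ≤ n → n ≤ N + A + k →
      B n = ∑ i ∈ Finset.Icc 1 k, B (n - B (n - i))) :
    B (N + A + k - 1) = N + (N - k + 1) * k + k - 3 ∧
    B (N + A + k) = N + (N - k + 1) * k + k - 1 := by
  have h2N : 2*N = k^2 + k := by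
    have hev : 2 ∣ k*(k+1) := (Nat.even_mul_succ_self k).two_dvd
    have e : k^2 + k = k*(k+1) := by ring
    omega
  have hNk : 2*k + 2 ≤ N := by
    have h1 : 4*k ≤ k*k := Nat.mul_le_mul_right k hk
    have h2 : k^2 = k*k := by ring
    omega
  have hmain := main_formula k N A hk h2N hNk hA B hinit hrec
  have hE := end_E k N A hk h2N hNk hA B hinit hrec hmain
  obtain ⟨D, hD⟩ : ∃ D, N = D + k := ⟨N - k, by omega⟩
  have hDk : k + 2 ≤ D := by omega
  have hA' : A = D*(k+1) + (k+1) := by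
    rw [hA]; have e : N - k + 1 = D + 1 := by omega
    rw [e]; ring
  have hA2 : A = (D+1)*k + (D+1) := by rw [hA']; ring
  have hA3 : A = D*k + D + k + 1 := by rw [hA']; ring
  have hXk : (N - k + 1)*k = (D+1)*k := by
    have e : N - k + 1 = D + 1 := by omega
    rw [e]
  have hBid : ∀ m, 1 ≤ m → m ≤ N → B m = m := by
    intro m h1 h2
    rcases Nat.lt_or_ge m N with h | h
    · exact hinit _ (by omega) (by omega)
    · have hm : m = N := by omega
      have h0 := hmain 0 (by omega)
      simp only [Nat.add_zero, Nat.zero_div, Nat.zero_mod, Nat.zero_mul, Nat.zero_sub,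
        Nat.add_zero] at h0
      rw [hm, h0]
  have hBN1 : B (N + 1) = N := by
    have h1 := hmain 1 (by omega)
    rw [Nat.div_eq_of_lt (by omega), Nat.mod_eq_of_lt (by omega)] at h1
    simpa using h1
  have hBN2 : B (N + 2) = N + 1 := by
    have h1 := hmain 2 (by omega)
    rw [Nat.div_eq_of_lt (by omega), Nat.mod_eq_of_lt (by omega)] at h1
    simpa using h1
  have hfA : ∀ d, 1 ≤ d → d ≤ k → B (N + (A - d)) = N + D*k + (k - d) := by
    intro d h1 h2
    have hlk : (k+1)*D = D*(k+1) := by ring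
    have e : A - d = (k+1)*D + (k+1-d) := by omega
    have hdiv : (A-d)/(k+1) = D := by
      rw [e, Nat.mul_add_div (by omega), Nat.div_eq_of_lt (by omega)]
      omega
    have hmod : (A-d) % (k+1) = k+1-d := by
      rw [e, Nat.mul_add_mod]; exact Nat.mod_eq_of_lt (by omega)
    rw [hmain (A-d) (by omega), hdiv, hmod]
    omega
  have hgauss : (∑ i ∈ Finset.Icc 1 k, i) = N := by
    have hg := gauss_icc k
    have hkk : k*(k+1) = k^2+k := by ring
    omega
  have hV1 := step_V1 k N A D hk hD hDk hA2 hA3 hXk B hrec hE hBid hBN1 hfA hgauss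
  have hV2 := step_V2 k N A D hk hD hDk hA2 hA3 hXk B hrec hE hBid hBN1 hBN2 hV1 hgauss
  constructor
  · have e : N + A + k - 1 = N + A + (k-1) := by omega
    rw [e, hV1]
    omega
  · rw [hV2]
    omega
end

section
/- Let k ≥ 4 be an integer and set N = (k² + k)/2. Suppose B : ℕ → ℕ satisfies B(0) = 0, B(i) = i for 1 ≤ i ≤ N − 1, and B(n) = ∑_{i=1}^k B(n − B(n−i)) for all n with N ≤ n ≤ (k³ + k²)/2 + 2k + 1. Then B((k³ + k²)/2 + 2k + 1) = B((k³ + k²)/2 + 2k) + 2; in particular, B is not slow. -/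
lemma herm (K t : ℕ) : ∑ r ∈ Finset.range (K+1), (t + r)/(K+1) = t := by
  induction t with
  | zero =>
    apply Finset.sum_eq_zero; intro r hr
    simp only [Nat.zero_add]
    exact Nat.div_eq_of_lt (Finset.mem_range.mp hr)
  | succ t ih =>
    have h1 : ∑ r ∈ Finset.range (K+1), (t + 1 + r)/(K+1)
        = ∑ r ∈ Finset.range (K+2), (t + r)/(K+1) - t/(K+1) := by
      rw [Finset.sum_range_succ' (fun r => (t + r)/(K+1)) (K+1)]
      simp only [Nat.add_zero]
      have : ∀ r, t + 1 + r = t + (r+1) := by intro r; omega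
      simp only [this]
      omega
    rw [h1, Finset.sum_range_succ, ih]
    have h2 : (t + (K+1))/(K+1) = t/(K+1) + 1 := Nat.add_div_right t (by omega)
    have h3 : t/(K+1) ≤ t := Nat.div_le_self _ _
    omega

lemma gaussIcc (m : ℕ) : 2 * ∑ i ∈ Finset.Icc 1 m, i = m * (m+1) := by
  induction m with
  | zero => simp
  | succ m ih =>
    rw [Finset.sum_Icc_succ_top (by omega), Nat.mul_add, ih]
    ring

lemma chib (k c b : ℕ) (hb1 : 1 ≤ b) (hbk : b ≤ k) :
    ∑ i ∈ Finset.Icc 1 k, (if i = b then c else 0) = c := by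
  rw [Finset.sum_ite_eq' (Finset.Icc 1 k) b (fun _ => c)]
  rw [if_pos (Finset.mem_Icc.mpr ⟨hb1, hbk⟩)]

lemma chis (k s : ℕ) (hs : s ≤ k) :
    ∑ i ∈ Finset.Icc 1 k, (if i ≤ s then (1:ℕ) else 0) = s := by
  have hf : (Finset.Icc 1 k).filter (fun i => i ≤ s) = Finset.Icc 1 s := by
    ext x; simp only [Finset.mem_filter, Finset.mem_Icc]; omega
  rw [← Finset.sum_filter, hf, Finset.sum_const, Nat.card_Icc]
  simp

lemma gIcc (k N : ℕ) (hkk : k * k + k = 2 * N) : ∑ i ∈ Finset.Icc 1 k, i = N := by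
  have := gaussIcc k
  nlinarith [this]

lemma lemA (k N : ℕ) (B : ℕ → ℕ) (hk : 4 ≤ k) (hkk : k * k + k = 2 * N)
    (hrec : ∀ n, N ≤ n → n ≤ k * N + 2 * k + 1 →
      B n = ∑ i ∈ Finset.Icc 1 k, B (n - B (n - i)))
    (hA' : ∀ a, a ≤ N → B a = a) :
    ∀ m, m ≤ k * N + k → B m + (m + k - N) / (k + 1) = m := by
  have hkN : k + 2 ≤ N := by nlinarith
  have hNkN : N ≤ k * N := Nat.le_mul_of_pos_left N (by omega)
  have hG : ∑ i ∈ Finset.Icc 1 k, i = N := gIcc k N hkk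
  have hd0 : ∀ a, a ≤ N → (a + k - N) / (k + 1) = 0 := by
    intro a ha; exact Nat.div_eq_of_lt (by omega)
  have hHerm : ∀ m, N ≤ m →
      (∑ i ∈ Finset.Icc 1 k, (m - i + k - N) / (k + 1)) + (m + k - N) / (k + 1) = m - N := by
    intro m hm
    have h := herm k (m - N)
    rw [Finset.sum_range_succ] at h
    have e1 : (m + k - N) / (k + 1) = (m - N + k) / (k + 1) := by congr 1; omega
    have e2 : ∑ i ∈ Finset.Icc 1 k, (m - i + k - N) / (k + 1)
        = ∑ r ∈ Finset.range k, (m - N + r) / (k + 1) := by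
      rw [show Finset.Icc 1 k = Finset.Ico 1 (k+1) from (Finset.Ico_add_one_right_eq_Icc 1 k).symm,
        Finset.sum_Ico_eq_sum_range]
      simp only [Nat.add_sub_cancel]
      rw [← Finset.sum_range_reflect (fun r => (m - N + r) / (k + 1)) k]
      apply Finset.sum_congr rfl
      intro j hj
      have hj' := Finset.mem_range.mp hj
      congr 1
      omega
    rw [e1, e2]
    exact h
  intro m
  induction m using Nat.strong_induction_on with
  | _ m IH =>
    intro hm
    rcases le_or_gt m N with hle | hgt
    · rw [hA' m hle, hd0 m hle]
      omega
    · rw [hrec m (by omega) (by omega)]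
      have key : ∀ i ∈ Finset.Icc 1 k, B (m - B (m - i)) = i + (m - i + k - N) / (k + 1) := by
        intro i hi
        obtain ⟨hi1, hik⟩ := Finset.mem_Icc.mp hi
        have hIHi : B (m - i) + (m - i + k - N) / (k + 1) = m - i :=
          IH (m - i) (by omega) (by omega)
        have hqb : i + (m - i + k - N) / (k + 1) ≤ N := by
          have hlt : m - i + k - N < (N - i + 1) * (k + 1) := by
            obtain ⟨j, hj⟩ : ∃ j, N = i + j := ⟨N - i, by omega⟩
            have hji : N - i = j := by omega
            rw [hji]
            have hbd : m - i + k - N + N + i ≤ k * N + 2 * k := by omega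
            have hik2 : i * k ≤ k * k := Nat.mul_le_mul_right k hik
            have hjk : i * k + j * k = N * k := by
              rw [hj]; ring
            have hexp : (j + 1) * (k + 1) = j * k + j + k + 1 := by ring
            linarith [hbd, hik2, hjk, hkk, hexp]
          have hd := (Nat.div_lt_iff_lt_mul (show 0 < k+1 by omega)).mpr hlt
          omega
        have harg : m - B (m - i) = i + (m - i + k - N) / (k + 1) := by
          generalize (m - i + k - N) / (k + 1) = q at hIHi ⊢
          omega
        rw [harg]
        exact hA' _ hqb
      rw [Finset.sum_congr rfl key, Finset.sum_add_distrib, hG]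
      have := hHerm m (by omega)
      omega

lemma lemC0 (k N D : ℕ) (B : ℕ → ℕ) (hk : 4 ≤ k) (hkk : k * k + k = 2 * N)
    (hD : N = D + k)
    (hrec : ∀ n, N ≤ n → n ≤ k * N + 2 * k + 1 →
      B n = ∑ i ∈ Finset.Icc 1 k, B (n - B (n - i)))
    (hA' : ∀ a, a ≤ N → B a = a)
    (hF0 : ∀ j, 1 ≤ j → j ≤ k → B (k * N + j) + D + 1 = k * N + j)
    (hBN1 : B (N + 1) = N) :
    ∀ s, s + 2 ≤ k → B (k * N + k + 1 + s) + D + 2 = k * N + k + 1 + s := by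
  have hkN : k + 2 ≤ N := by nlinarith
  have hNkN : N ≤ k * N := Nat.le_mul_of_pos_left N (by omega)
  have hkNbig : N + 3 * k ≤ k * N := by nlinarith
  have hG : ∑ i ∈ Finset.Icc 1 k, i = N := gIcc k N hkk
  have hkD : k * N = k * D + k * k := by rw [hD]; ring
  intro s
  induction s using Nat.strong_induction_on with
  | _ s IH =>
    intro hs
    have hsum := hrec (k * N + k + 1 + s) (by omega) (by omega)
    have key : ∀ i ∈ Finset.Icc 1 k,
        B (k * N + k + 1 + s - B (k * N + k + 1 + s - i)) + (if i = k then 1 else 0)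
          = i + (D + 1) + (if i ≤ s then 1 else 0) := by
      intro i hi
      obtain ⟨hi1, hik⟩ := Finset.mem_Icc.mp hi
      rcases le_or_gt i s with his | his
      · have e : k * N + k + 1 + s - i = k * N + k + 1 + (s - i) := by omega
        rw [e]
        have hv := IH (s - i) (by omega) (by omega)
        have harg : k * N + k + 1 + s - B (k * N + k + 1 + (s - i)) = i + D + 2 := by omega
        rw [harg, hA' (i + D + 2) (by omega)]
        have h1 : ¬ (i = k) := by omega
        simp only [if_neg h1, if_pos his]
        omega
      · have e : k * N + k + 1 + s - i = k * N + (k + 1 + s - i) := by omega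
        rw [e]
        have hv := hF0 (k + 1 + s - i) (by omega) (by omega)
        have harg : k * N + k + 1 + s - B (k * N + (k + 1 + s - i)) = i + D + 1 := by omega
        rw [harg]
        rcases eq_or_lt_of_le hik with hik' | hik'
        · rw [hik', show k + D + 1 = N + 1 by omega, hBN1]
          rw [if_pos rfl, if_neg (show ¬ (k ≤ s) by omega)]
          omega
        · rw [hA' (i + D + 1) (by omega)]
          rw [if_neg (show ¬ (i = k) by omega), if_neg (show ¬ (i ≤ s) by omega)]
          omega
    have hsum2 := Finset.sum_congr rfl key
    rw [Finset.sum_add_distrib, Finset.sum_add_distrib, Finset.sum_add_distrib, hG,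
      chib k 1 k (by omega) le_rfl, chis k s (by omega), Finset.sum_const, Nat.card_Icc,
      smul_eq_mul] at hsum2
    have hexp : (k + 1 - 1) * (D + 1) = k * D + k := by
      rw [show k + 1 - 1 = k by omega]; ring
    omega

lemma lemC1 (k N D : ℕ) (B : ℕ → ℕ) (hk : 4 ≤ k) (hkk : k * k + k = 2 * N)
    (hD : N = D + k)
    (hrec : ∀ n, N ≤ n → n ≤ k * N + 2 * k + 1 →
      B n = ∑ i ∈ Finset.Icc 1 k, B (n - B (n - i)))
    (hA' : ∀ a, a ≤ N → B a = a)
    (hF0 : ∀ j, 1 ≤ j → j ≤ k → B (k * N + j) + D + 1 = k * N + j)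
    (hBN1 : B (N + 1) = N)
    (hC0 : ∀ s, s + 2 ≤ k → B (k * N + k + 1 + s) + D + 2 = k * N + k + 1 + s) :
    B (k * N + 2 * k) + D + 3 = k * N + 2 * k := by
  have hkN : k + 2 ≤ N := by nlinarith
  have hNkN : N ≤ k * N := Nat.le_mul_of_pos_left N (by omega)
  have hkNbig : N + 3 * k ≤ k * N := by nlinarith
  have hG : ∑ i ∈ Finset.Icc 1 k, i = N := gIcc k N hkk
  have hkD : k * N = k * D + k * k := by rw [hD]; ring
  have hsum := hrec (k * N + 2 * k) (by omega) (by omega)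
  have key : ∀ i ∈ Finset.Icc 1 k,
      B (k * N + 2 * k - B (k * N + 2 * k - i)) + (if i = k - 1 then 1 else 0)
        + (if i = k then 2 else 0) = i + (D + 2) := by
    intro i hi
    obtain ⟨hi1, hik⟩ := Finset.mem_Icc.mp hi
    rcases eq_or_lt_of_le hik with hik' | hik'
    · have e : k * N + 2 * k - i = k * N + k := by omega
      rw [e]
      have hv := hF0 k (by omega) le_rfl
      have harg : k * N + 2 * k - B (k * N + k) = N + 1 := by omega
      rw [harg, hBN1]
      rw [if_neg (show ¬ (i = k - 1) by omega), if_pos hik']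
      omega
    · have e : k * N + 2 * k - i = k * N + k + 1 + (k - 1 - i) := by omega
      rw [e]
      have hv := hC0 (k - 1 - i) (by omega)
      have harg : k * N + 2 * k - B (k * N + k + 1 + (k - 1 - i)) = i + D + 2 := by omega
      rw [harg]
      rcases eq_or_lt_of_le (show i ≤ k - 1 by omega) with hik'' | hik''
      · rw [hik'', show k - 1 + D + 2 = N + 1 by omega, hBN1]
        rw [if_pos rfl, if_neg (show ¬ (k - 1 = k) by omega)]
        omega
      · rw [hA' (i + D + 2) (by omega)]
        rw [if_neg (show ¬ (i = k - 1) by omega), if_neg (show ¬ (i = k) by omega)]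
        omega
  have hsum2 := Finset.sum_congr rfl key
  rw [Finset.sum_add_distrib, Finset.sum_add_distrib, Finset.sum_add_distrib, hG,
    chib k 2 k (by omega) le_rfl, chib k 1 (k - 1) (by omega) (by omega),
    Finset.sum_const, Nat.card_Icc, smul_eq_mul] at hsum2
  have hexp : (k + 1 - 1) * (D + 2) = k * D + 2 * k := by
    rw [show k + 1 - 1 = k by omega]; ring
  omega

lemma lemC2 (k N D : ℕ) (B : ℕ → ℕ) (hk : 4 ≤ k) (hkk : k * k + k = 2 * N)
    (hD : N = D + k)
    (hrec : ∀ n, N ≤ n → n ≤ k * N + 2 * k + 1 →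
      B n = ∑ i ∈ Finset.Icc 1 k, B (n - B (n - i)))
    (hA' : ∀ a, a ≤ N → B a = a)
    (hBN1 : B (N + 1) = N)
    (hBN2 : B (N + 2) = N + 1)
    (hC0 : ∀ s, s + 2 ≤ k → B (k * N + k + 1 + s) + D + 2 = k * N + k + 1 + s)
    (hC1 : B (k * N + 2 * k) + D + 3 = k * N + 2 * k) :
    B (k * N + 2 * k + 1) + D + 2 = k * N + 2 * k + 1 := by
  have hkN : k + 2 ≤ N := by nlinarith
  have hNkN : N ≤ k * N := Nat.le_mul_of_pos_left N (by omega)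
  have hkNbig : N + 3 * k ≤ k * N := by nlinarith
  have hG : ∑ i ∈ Finset.Icc 1 k, i = N := gIcc k N hkk
  have hkD : k * N = k * D + k * k := by rw [hD]; ring
  have hsum := hrec (k * N + 2 * k + 1) (by omega) (by omega)
  have key : ∀ i ∈ Finset.Icc 1 k,
      B (k * N + 2 * k + 1 - B (k * N + 2 * k + 1 - i)) + (if i = k - 1 then 1 else 0)
        + (if i = k then 1 else 0) = i + (D + 2) + (if i = 1 then 1 else 0) := by
    intro i hi
    obtain ⟨hi1, hik⟩ := Finset.mem_Icc.mp hi
    rcases eq_or_lt_of_le hi1 with hi1' | hi1'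
    · have e : k * N + 2 * k + 1 - i = k * N + 2 * k := by omega
      rw [e]
      have harg : k * N + 2 * k + 1 - B (k * N + 2 * k) = D + 4 := by omega
      rw [harg, hA' (D + 4) (by omega)]
      rw [if_neg (show ¬ (i = k - 1) by omega), if_neg (show ¬ (i = k) by omega),
        if_pos (show i = 1 by omega)]
      omega
    · have e : k * N + 2 * k + 1 - i = k * N + k + 1 + (k - i) := by omega
      rw [e]
      have hv := hC0 (k - i) (by omega)
      have harg : k * N + 2 * k + 1 - B (k * N + k + 1 + (k - i)) = i + D + 2 := by omega
      rw [harg]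
      rcases eq_or_lt_of_le hik with hik' | hik'
      · rw [show i + D + 2 = N + 2 by omega, hBN2]
        rw [if_neg (show ¬ (i = k - 1) by omega), if_pos hik',
          if_neg (show ¬ (i = 1) by omega)]
        omega
      · rcases eq_or_lt_of_le (show i ≤ k - 1 by omega) with hik'' | hik''
        · rw [hik'', show k - 1 + D + 2 = N + 1 by omega, hBN1]
          rw [if_pos rfl, if_neg (show ¬ (k - 1 = k) by omega),
            if_neg (show ¬ (k - 1 = 1) by omega)]
          omega
        · rw [hA' (i + D + 2) (by omega)]
          rw [if_neg (show ¬ (i = k - 1) by omega), if_neg (show ¬ (i = k) by omega),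
            if_neg (show ¬ (i = 1) by omega)]
          omega
  have hsum2 := Finset.sum_congr rfl key
  rw [Finset.sum_add_distrib, Finset.sum_add_distrib, Finset.sum_add_distrib,
    Finset.sum_add_distrib, hG, chib k 1 k (by omega) le_rfl,
    chib k 1 (k - 1) (by omega) (by omega), chib k 1 1 le_rfl (by omega),
    Finset.sum_const, Nat.card_Icc, smul_eq_mul] at hsum2
  have hexp : (k + 1 - 1) * (D + 2) = k * D + 2 * k := by
    rw [show k + 1 - 1 = k by omega]; ring
  omega

/-- with `k ≥ 4`, `N = (k²+k)/2`, and `B` satisfying the initial condition and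
the `B_k`-recurrence for `N ≤ n ≤ (k³+k²)/2 + 2k + 1`:
`B ((k³+k²)/2 + 2k + 1) = B ((k³+k²)/2 + 2k) + 2`; in particular `B` is not slow. -/
theorem stmt_16 (k N : ℕ) (hk : 4 ≤ k) (hN : N = (k ^ 2 + k) / 2) (B : ℕ → ℕ)
    (hB0 : B 0 = 0)
    (hinit : ∀ i, 1 ≤ i → i ≤ N - 1 → B i = i)
    (hrec : ∀ n, N ≤ n → n ≤ (k ^ 3 + k ^ 2) / 2 + 2 * k + 1 →
      B n = ∑ i ∈ Finset.Icc 1 k, B (n - B (n - i))) :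
    B ((k ^ 3 + k ^ 2) / 2 + 2 * k + 1) = B ((k ^ 3 + k ^ 2) / 2 + 2 * k) + 2 ∧
    ¬(∀ n : ℕ, (B (n + 1) : ℤ) - B n ∈ ({0, 1} : Set ℤ)) := by
  have h2N : k ^ 2 + k = 2 * N := by
    have he : 2 ∣ k ^ 2 + k := by
      have : k ^ 2 + k = k * (k + 1) := by ring
      rw [this]
      exact (Nat.even_mul_succ_self k).two_dvd
    omega
  have hkk : k * k + k = 2 * N := by nlinarith [h2N]
  have hkN : k + 2 ≤ N := by nlinarith
  have h2kN : 2 * k ≤ N := by nlinarith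
  have hT : (k ^ 3 + k ^ 2) / 2 = k * N := by
    have : k ^ 3 + k ^ 2 = 2 * (k * N) := by nlinarith [h2N]
    omega
  have hNkN : N ≤ k * N := Nat.le_mul_of_pos_left N (by omega)
  have hkNbig : N + 3 * k ≤ k * N := by nlinarith
  rw [hT] at hrec ⊢
  have hG : ∑ i ∈ Finset.Icc 1 k, i = N := gIcc k N hkk
  -- B N = N
  have hBN : B N = N := by
    have h := hrec N le_rfl (by omega)
    have h2 : ∑ i ∈ Finset.Icc 1 k, B (N - B (N - i)) = ∑ i ∈ Finset.Icc 1 k, i := by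
      apply Finset.sum_congr rfl
      intro i hi
      obtain ⟨hi1, hik⟩ := Finset.mem_Icc.mp hi
      have h1 : B (N - i) = N - i := hinit _ (by omega) (by omega)
      rw [h1]
      have h2 : N - (N - i) = i := by omega
      rw [h2]
      exact hinit i hi1 (by omega)
    rw [h, h2, hG]
  have hA' : ∀ a, a ≤ N → B a = a := by
    intro a ha
    rcases lt_or_ge a N with h | h
    · rcases Nat.eq_zero_or_pos a with h0 | h0
      · rw [h0, hB0]
      · exact hinit a h0 (by omega)
    · have : a = N := by omega
      rw [this, hBN]
  have hA := lemA k N B hk hkk hrec hA'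
  -- tail setup
  obtain ⟨D, hD⟩ : ∃ D, N = D + k := ⟨N - k, by omega⟩
  have hkD : k * N = k * D + k * k := by rw [hD]; ring
  have hfac : (k + 1) * D + N = k * N := by
    have h5 : (k + 1) * D = k * D + D := by ring
    omega
  have hdT : ∀ j, 1 ≤ j → j ≤ k + 1 → (k * N + j + k - N) / (k + 1) = D + 1 := by
    intro j hj1 hj2
    have e : k * N + j + k - N = (k + 1) * D + ((j - 1) + (k + 1)) := by omega
    rw [e, Nat.mul_add_div (by omega), Nat.add_div_right _ (by omega),
      Nat.div_eq_of_lt (by omega)]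
  have hF0 : ∀ j, 1 ≤ j → j ≤ k → B (k * N + j) + D + 1 = k * N + j := by
    intro j hj1 hj2
    have h := hA (k * N + j) (by omega)
    rw [hdT j hj1 (by omega)] at h
    omega
  have hBN1 : B (N + 1) = N := by
    have h := hA (N + 1) (by omega)
    have e : (N + 1 + k - N) / (k + 1) = 1 := by
      rw [show N + 1 + k - N = k + 1 by omega, Nat.div_self (by omega)]
    rw [e] at h; omega
  have hBN2 : B (N + 2) = N + 1 := by
    have h := hA (N + 2) (by omega)
    have e : (N + 2 + k - N) / (k + 1) = 1 := by
      rw [show N + 2 + k - N = 1 + (k + 1) by omega, Nat.add_div_right _ (by omega),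
        Nat.div_eq_of_lt (by omega)]
    rw [e] at h; omega
  have hC0 := lemC0 k N D B hk hkk hD hrec hA' hF0 hBN1
  have hC1 := lemC1 k N D B hk hkk hD hrec hA' hF0 hBN1 hC0
  have hC2 := lemC2 k N D B hk hkk hD hrec hA' hBN1 hBN2 hC0 hC1
  constructor
  · omega
  · intro hslow
    have h := hslow (k * N + 2 * k)
    simp only [Set.mem_insert_iff, Set.mem_singleton_iff] at h
    rcases h with h | h <;> omega
end

section
/- Let k ≥ 2 and N ≥ k be integers, and suppose B : ℕ → ℕ satisfies B(0) = 0, B(i) = i for 1 ≤ i ≤ N, B(n) = ∑_{i=1}^k B(n − B(n−i)) for all n > N, and B is slow (B(n+1) − B(n) ∈ {0, 1} for all n ≥ 1). Then k = 3, N ∈ {5, 6}, and B equals the B-sequence at every positive index (i.e., B is the slow sequence satisfying B(n) = B(n − B(n−1)) + B(n − B(n−2)) + B(n − B(n−3)) with B(i) = i for 1 ≤ i ≤ 5). -/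
def s17g (m : ℕ) : ℕ := ∑ i ∈ Finset.Icc 1 m, i

lemma s17g_succ (m : ℕ) : s17g (m+1) = s17g m + (m+1) :=
  Finset.sum_Icc_succ_top (by omega) _

lemma s17_sum_add (c m : ℕ) : ∑ i ∈ Finset.Icc 1 m, (c + i) = m * c + s17g m := by
  rw [Finset.sum_add_distrib, Finset.sum_const, Nat.card_Icc, s17g]
  simp [Nat.smul_one_eq_cast]

lemma s17_sum_ite_eq (c j m : ℕ) (h1 : 1 ≤ j) (h2 : j ≤ m) :
    ∑ i ∈ Finset.Icc 1 m, (if i = j then c else 0) = c := by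
  rw [Finset.sum_ite_eq' (Finset.Icc 1 m) j (fun _ => c)]
  simp [Finset.mem_Icc, h1, h2]

lemma s17_sum_ite_le (c s m : ℕ) (h : s ≤ m) :
    ∑ i ∈ Finset.Icc 1 m, (if i ≤ s then c else 0) = s * c := by
  rw [← Finset.sum_filter]
  have : (Finset.Icc 1 m).filter (· ≤ s) = Finset.Icc 1 s := by
    ext x; simp [Finset.mem_Icc, Finset.mem_filter]; omega
  rw [this, Finset.sum_const, Nat.card_Icc]
  simp [Nat.smul_one_eq_cast]

lemma s17_sum_ite_ne (j m : ℕ) (h1 : 1 ≤ j) (h2 : j ≤ m) :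
    ∑ i ∈ Finset.Icc 1 m, (if i = j then 0 else 1) = m - 1 := by
  have h3 : ∑ i ∈ Finset.Icc 1 m, ((if i = j then (0:ℕ) else 1) + (if i = j then 1 else 0))
      = ∑ i ∈ Finset.Icc 1 m, 1 := by
    apply Finset.sum_congr rfl; intro i _; by_cases h : i = j <;> simp [h]
  rw [Finset.sum_add_distrib, s17_sum_ite_eq 1 j m h1 h2] at h3
  simp [Nat.card_Icc] at h3
  omega

section Key4
variable (k K : ℕ) (B : ℕ → ℕ)

/-- Phase 1 formula. -/
lemma s17_P1 (hgk : s17g k = K + k)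
    (H1 : ∀ n, n ≤ K + k → B n = n)
    (H2 : ∀ n, K + k < n → B n = ∑ i ∈ Finset.Icc 1 k, B (n - B (n - i))) :
    ∀ m q s, (k+1)*q + s = m → q ≤ K → s ≤ k → q + s < K + k →
      B (K+k+1+m) = K+k+k*q+s := by
  intro m
  induction m using Nat.strong_induction_on with
  | _ m ih =>
    intro q s hm hq hs hqs
    rw [H2 _ (by omega)]
    have hkq : (k+1)*q = k*q + q := by ring
    have hterm : ∀ i ∈ Finset.Icc 1 k,
        B (K+k+1+m - B (K+k+1+m - i)) = q + i + (if i ≤ s then 1 else 0) := by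
      intro i hi
      simp only [Finset.mem_Icc] at hi
      by_cases hcase : i ≤ s
      · have e1 : K+k+1+m - i = K+k+1+((k+1)*q+(s-i)) := by omega
        have e2 : B (K+k+1+m - i) = K+k+k*q+(s-i) := by
          rw [e1]; exact ih ((k+1)*q+(s-i)) (by omega) q (s-i) rfl hq (by omega) (by omega)
        have e3 : K+k+1+m - B (K+k+1+m - i) = q+1+i := by rw [e2]; omega
        rw [e3, H1 _ (by omega)]
        simp [hcase] <;> omega
      · rcases Nat.eq_zero_or_pos q with hq0 | hqpos
        · -- q = 0, so m = s
          have hq0' : k*q = 0 := by rw [hq0]; ring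
          have hq0'' : (k+1)*q = 0 := by rw [hq0]; ring
          have hms : m = s := by omega
          have e2 : B (K+k+1+m - i) = K+k+1+s-i := by
            rw [show K+k+1+m-i = K+k+1+s-i by omega]
            exact H1 _ (by omega)
          have e3 : K+k+1+m - B (K+k+1+m - i) = i := by rw [e2]; omega
          rw [e3, H1 i (by omega)]
          simp [hcase] <;> omega
        · obtain ⟨p, rfl⟩ : ∃ p, q = p + 1 := ⟨q - 1, by omega⟩
          have hkp : (k+1)*(p+1) = (k+1)*p + (k+1) := by ring
          have hkp2 : k*(p+1) = k*p + k := by ring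
          have e1 : K+k+1+m - i = K+k+1+((k+1)*p+(k+1+s-i)) := by omega
          have e2 : B (K+k+1+m - i) = K+k+k*p+(k+1+s-i) := by
            rw [e1]
            exact ih ((k+1)*p+(k+1+s-i)) (by omega) p (k+1+s-i) rfl (by omega)
              (by omega) (by omega)
          have e3 : K+k+1+m - B (K+k+1+m - i) = (p+1)+i := by rw [e2]; omega
          rw [e3, H1 _ (by omega)]
          simp [hcase] <;> omega
    rw [Finset.sum_congr rfl hterm]
    have : ∑ i ∈ Finset.Icc 1 k, (q + i + (if i ≤ s then 1 else 0))
        = (k*q + s17g k) + s * 1 := by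
      rw [Finset.sum_add_distrib, s17_sum_add, s17_sum_ite_le 1 s k hs]
    rw [this]; omega
end Key4

lemma s17_key4 (k K : ℕ) (B : ℕ → ℕ) (hk : 4 ≤ k) (hgk : s17g k = K + k)
    (H1 : ∀ n, n ≤ K + k → B n = n)
    (H2 : ∀ n, K + k < n → B n = ∑ i ∈ Finset.Icc 1 k, B (n - B (n - i)))
    (H3 : ∀ n : ℕ, 1 ≤ n → (B (n + 1) : ℤ) - B n ∈ ({0, 1} : Set ℤ)) : False := by
  have P1 := s17_P1 k K B hgk H1 H2
  have hKk : (k+1)*K = k*K + K := by ring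
  have hKK : K + 3 ≤ s17g k := by omega
  -- B (T+1) = T and B (T+2) = T+1
  have hT1 : B (K+k+1) = K+k := by
    have := P1 0 0 0 (by ring) (by omega) (by omega) (by omega)
    rw [show K+k+1+0 = K+k+1 by omega] at this; omega
  have hT2 : B (K+k+1+1) = K+k+1 := by
    have := P1 1 0 1 (by ring) (by omega) (by omega) (by omega); omega
  -- Phase 2, middle part
  have Lmid : ∀ d, d ≤ k-2 → B (K+k+1+((k+1)*K+k+d)) + 1 = K+k+k*K+k+d := by
    intro d
    induction d using Nat.strong_induction_on with
    | _ d ihd =>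
      intro hd
      rw [H2 _ (by omega)]
      have hterm : ∀ i ∈ Finset.Icc 1 k,
          B (K+k+1+((k+1)*K+k+d) - B (K+k+1+((k+1)*K+k+d) - i))
            = K + i + ((if i ≤ d then 1 else 0) + (if i = k then 0 else 1)) := by
        intro i hi
        simp only [Finset.mem_Icc] at hi
        by_cases h1 : i ≤ d
        · have e1 : K+k+1+((k+1)*K+k+d) - i = K+k+1+((k+1)*K+k+(d-i)) := by omega
          have e2 : B (K+k+1+((k+1)*K+k+d) - i) + 1 = K+k+k*K+k+(d-i) := by
            rw [e1]; exact ihd (d-i) (by omega) (by omega)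
          have e3 : K+k+1+((k+1)*K+k+d) - B (K+k+1+((k+1)*K+k+d) - i) = K+2+i := by
            omega
          rw [e3, H1 _ (by omega)]
          simp [h1, show i ≠ k by omega] <;> omega
        · by_cases h2 : i = k
          · have e1 : K+k+1+((k+1)*K+k+d) - i = K+k+1+((k+1)*K+d) := by omega
            have e2 : B (K+k+1+((k+1)*K+k+d) - i) = K+k+k*K+d := by
              rw [e1]; exact P1 ((k+1)*K+d) K d rfl (le_refl K) (by omega) (by omega)
            have e3 : K+k+1+((k+1)*K+k+d) - B (K+k+1+((k+1)*K+k+d) - i) = K+k+1 := by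
              omega
            rw [e3, hT1]
            simp [h1, h2, show ¬ (k ≤ d) by omega]
          · have e1 : K+k+1+((k+1)*K+k+d) - i = K+k+1+((k+1)*K+(k+d-i)) := by omega
            have e2 : B (K+k+1+((k+1)*K+k+d) - i) = K+k+k*K+(k+d-i) := by
              rw [e1]; exact P1 ((k+1)*K+(k+d-i)) K (k+d-i) rfl (le_refl K) (by omega) (by omega)
            have e3 : K+k+1+((k+1)*K+k+d) - B (K+k+1+((k+1)*K+k+d) - i) = K+1+i := by
              omega
            rw [e3, H1 _ (by omega)]
            simp [h1, h2] <;> omega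
      rw [Finset.sum_congr rfl hterm, Finset.sum_add_distrib, Finset.sum_add_distrib,
        Finset.sum_add_distrib,
        s17_sum_ite_le 1 d k (by omega), s17_sum_ite_ne k k (by omega) (le_refl k),
        Finset.sum_const, Nat.card_Icc, smul_eq_mul]
      have hsum : ∑ x ∈ Finset.Icc 1 k, x = K + k := hgk
      have hbr : (k + 1 - 1) * K = k * K := by simp
      omega
  obtain ⟨e, rfl⟩ : ∃ e, k = e + 1 := ⟨k - 1, by omega⟩
  set k := e + 1 with hkdef
  have Llast : B (K+k+1+((k+1)*K+k+e)) + 2 = K+k+k*K+k+e := by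
    rw [H2 _ (by omega)]
    have hterm : ∀ i ∈ Finset.Icc 1 k,
        B (K+k+1+((k+1)*K+k+e) - B (K+k+1+((k+1)*K+k+e) - i))
          = K + i + ((if i + 1 ≤ e then 2 else 0) + (if i = e then 1 else 0)) := by
      intro i hi
      simp only [Finset.mem_Icc] at hi
      by_cases h1 : i ≤ e
      · have e1 : K+k+1+((k+1)*K+k+e) - i = K+k+1+((k+1)*K+k+(e-i)) := by omega
        have e2 : B (K+k+1+((k+1)*K+k+e) - i) + 1 = K+k+k*K+k+(e-i) := by
          rw [e1]; exact Lmid (e-i) (by omega)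
        have e3 : K+k+1+((k+1)*K+k+e) - B (K+k+1+((k+1)*K+k+e) - i) = K+2+i := by
          omega
        by_cases h2 : i = e
        · rw [e3, show K+2+i = K+k+1 by omega, hT1]
          simp [h2, show ¬ (e+1 ≤ e) by omega] <;> omega
        · rw [e3, H1 _ (by omega)]
          simp [h2, show i+1 ≤ e by omega] <;> omega
      · have h2 : i = k := by omega
        have e1 : K+k+1+((k+1)*K+k+e) - i = K+k+1+((k+1)*K+e) := by omega
        have e2 : B (K+k+1+((k+1)*K+k+e) - i) = K+k+k*K+e := by
          rw [e1]; exact P1 ((k+1)*K+e) K e rfl (le_refl K) (by omega) (by omega)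
        have e3 : K+k+1+((k+1)*K+k+e) - B (K+k+1+((k+1)*K+k+e) - i) = K+k+1 := by
          omega
        rw [e3, hT1]
        simp [show ¬ (i+1 ≤ e) by omega, show i ≠ e by omega] <;> omega
    have hcongr : ∀ i ∈ Finset.Icc 1 k, (if i + 1 ≤ e then (2:ℕ) else 0) = (if i ≤ e-1 then 2 else 0) := by
      intro i _; rw [if_congr (by omega : (i+1 ≤ e) ↔ (i ≤ e-1)) rfl rfl]
    rw [Finset.sum_congr rfl hterm, Finset.sum_add_distrib, Finset.sum_add_distrib,
      Finset.sum_add_distrib,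
      Finset.sum_congr rfl hcongr,
      s17_sum_ite_le 2 (e-1) k (by omega), s17_sum_ite_eq 1 e k (by omega) (by omega),
      Finset.sum_const, Nat.card_Icc, smul_eq_mul]
    have hsum : ∑ x ∈ Finset.Icc 1 k, x = K + k := hgk
    have hbr : (k + 1 - 1) * K = k * K := by simp
    omega
  have Lbad : B (K+k+1+((k+1)*K+k+e+1)) = K+k+k*K+k+e := by
    rw [H2 _ (by omega)]
    have hterm : ∀ i ∈ Finset.Icc 1 k,
        B (K+k+1+((k+1)*K+k+e+1) - B (K+k+1+((k+1)*K+k+e+1) - i))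
          = K + i + ((if i = 1 then 1 else 0) + (if i + 1 ≤ e then 2 else 0)
              + (if i = e then 1 else 0) + (if i = k then 1 else 0)) := by
      intro i hi
      simp only [Finset.mem_Icc] at hi
      by_cases h0 : i = 1
      · have e1 : K+k+1+((k+1)*K+k+e+1) - i = K+k+1+((k+1)*K+k+e) := by omega
        have e2 : B (K+k+1+((k+1)*K+k+e+1) - i) + 2 = K+k+k*K+k+e := by
          rw [e1]; exact Llast
        have e3 : K+k+1+((k+1)*K+k+e+1) - B (K+k+1+((k+1)*K+k+e+1) - i) = K+4 := by
          omega
        rw [e3, H1 _ (by omega)]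
        simp [h0, show (1:ℕ)+1 ≤ e by omega, show (1:ℕ) ≠ e by omega, show (1:ℕ) ≠ k by omega] <;> omega
      · by_cases h2 : i ≤ e
        · have e1 : K+k+1+((k+1)*K+k+e+1) - i = K+k+1+((k+1)*K+k+(e+1-i)) := by omega
          have e2 : B (K+k+1+((k+1)*K+k+e+1) - i) + 1 = K+k+k*K+k+(e+1-i) := by
            rw [e1]; exact Lmid (e+1-i) (by omega)
          have e3 : K+k+1+((k+1)*K+k+e+1) - B (K+k+1+((k+1)*K+k+e+1) - i) = K+2+i := by
            omega
          by_cases h3 : i = e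
          · rw [e3, show K+2+i = K+k+1 by omega, hT1]
            simp [h3, show e ≠ 1 by omega, show ¬ (e+1 ≤ e) by omega, show e ≠ k by omega] <;> omega
          · rw [e3, H1 _ (by omega)]
            simp [h0, h3, show i+1 ≤ e by omega, show i ≠ k by omega] <;> omega
        · have h2' : i = k := by omega
          have e1 : K+k+1+((k+1)*K+k+e+1) - i = K+k+1+((k+1)*K+k+0) := by omega
          have e2 : B (K+k+1+((k+1)*K+k+e+1) - i) + 1 = K+k+k*K+k+0 := by
            rw [e1]; exact Lmid 0 (by omega)
          have e3 : K+k+1+((k+1)*K+k+e+1) - B (K+k+1+((k+1)*K+k+e+1) - i) = K+k+1+1 := by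
            omega
          rw [e3, hT2]
          simp [h2', show k ≠ 1 by omega, show ¬ (k+1 ≤ e) by omega, show k ≠ e by omega] <;> omega
    have hcongr : ∀ i ∈ Finset.Icc 1 k, (if i + 1 ≤ e then (2:ℕ) else 0) = (if i ≤ e-1 then 2 else 0) := by
      intro i _; rw [if_congr (by omega : (i+1 ≤ e) ↔ (i ≤ e-1)) rfl rfl]
    rw [Finset.sum_congr rfl hterm, Finset.sum_add_distrib, Finset.sum_add_distrib,
      Finset.sum_add_distrib, Finset.sum_add_distrib, Finset.sum_add_distrib,
      Finset.sum_congr rfl hcongr,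
      s17_sum_ite_le 2 (e-1) k (by omega), s17_sum_ite_eq 1 e k (by omega) (by omega),
      s17_sum_ite_eq 1 1 k (by omega) (by omega), s17_sum_ite_eq 1 k k (by omega) (le_refl k),
      Finset.sum_const, Nat.card_Icc, smul_eq_mul]
    have hsum : ∑ x ∈ Finset.Icc 1 k, x = K + k := hgk
    have hbr : (k + 1 - 1) * K = k * K := by simp
    omega
  have hs := H3 (K+k+1+((k+1)*K+k+e)) (by omega)
  rw [show K+k+1+((k+1)*K+k+e)+1 = K+k+1+((k+1)*K+k+e+1) by omega, Lbad] at hs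
  simp only [Set.mem_insert_iff, Set.mem_singleton_iff] at hs
  omega

lemma s17g_ge (m : ℕ) : m ≤ s17g m := by
  cases m with
  | zero => simp [s17g]
  | succ p => rw [s17g_succ]; omega

lemma s17_key2 (B : ℕ → ℕ)
    (H1 : ∀ n, n ≤ 3 → B n = n)
    (H2 : ∀ n, 3 < n → B n = ∑ i ∈ Finset.Icc 1 2, B (n - B (n - i)))
    (H3 : ∀ n : ℕ, 1 ≤ n → (B (n + 1) : ℤ) - B n ∈ ({0, 1} : Set ℤ)) : False := by
  have hsum : ∀ n, 3 < n → B n = B (n - B (n-1)) + B (n - B (n-2)) := by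
    intro n hn
    rw [H2 n hn, show Finset.Icc 1 2 = {1,2} by decide,
      Finset.sum_insert (by decide), Finset.sum_singleton]
  have h4 : B 4 = 3 := by rw [hsum 4 (by omega)]; norm_num [H1]
  have h5 : B 5 = 4 := by rw [hsum 5 (by omega)]; norm_num [H1, h4]
  have h6 : B 6 = 5 := by rw [hsum 6 (by omega)]; norm_num [H1, h4, h5]
  have h7 : B 7 = 5 := by rw [hsum 7 (by omega)]; norm_num [H1, h5, h6]
  have h8 : B 8 = 6 := by rw [hsum 8 (by omega)]; norm_num [H1, h6, h7]
  have h9 : B 9 = 6 := by rw [hsum 9 (by omega)]; norm_num [H1, h4, h7, h8]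
  have h10 : B 10 = 6 := by rw [hsum 10 (by omega)]; norm_num [H1, h4, h8, h9]
  have h11 : B 11 = 8 := by rw [hsum 11 (by omega)]; norm_num [H1, h5, h9, h10]
  have hs := H3 10 (by omega)
  rw [show (10:ℕ)+1 = 11 from rfl, h11, h10] at hs
  simp only [Set.mem_insert_iff, Set.mem_singleton_iff] at hs
  omega



/-- The auxiliary sequence: `a 1 = 3`, `a i = 3 * a (i-1) - 1` for `i ≥ 2`. -/
def a : ℕ → ℕ
  | 0 => 0
  | 1 => 3
  | n + 2 => 3 * a (n + 1) - 1

/-- `R(m, i) = max(0, ⌊(m − a i − 1)/3^i⌋)` (truncated ℕ-subtraction gives the max). -/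
def Rmi (m i : ℕ) : ℕ := (m - a i - 1) / 3 ^ i

/-- `R(m) = ∑_{i=1}^∞ R(m, i)`; all terms with `i > m` vanish, so a finite sum suffices. -/
def R (m : ℕ) : ℕ := ∑ i ∈ Finset.Icc 1 m, Rmi m i

/-- `m` has a witness pair `(k, i)` of positive integers with `m = k·3^i + a i`. -/
def HasWitness (m : ℕ) : Prop := ∃ k i : ℕ, 1 ≤ k ∧ 1 ≤ i ∧ m = k * 3 ^ i + a i

/-- `B` is the `B`-sequence: `B 0 = 0`, `B n = n` for `1 ≤ n ≤ 5`, and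
`B n = B (n - B (n-1)) + B (n - B (n-2)) + B (n - B (n-3))` for `n ≥ 6`. -/
def IsBSeq (B : ℕ → ℕ) : Prop :=
  B 0 = 0 ∧ (∀ n, 1 ≤ n → n ≤ 5 → B n = n) ∧
    ∀ n, 6 ≤ n → B n = B (n - B (n - 1)) + B (n - B (n - 2)) + B (n - B (n - 3))

/-- if `B` satisfies `B i = i` for `1 ≤ i ≤ N` (with `N ≥ k ≥ 2`), the
`B_k`-recurrence for all `n > N`, and is slow, then `k = 3`, `N ∈ {5, 6}`, and `B` agrees with
the `B`-sequence at every positive index. -/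
theorem stmt_17 (k N : ℕ) (hk : 2 ≤ k) (hN : k ≤ N) (B : ℕ → ℕ)
    (hB0 : B 0 = 0)
    (hinit : ∀ i, 1 ≤ i → i ≤ N → B i = i)
    (hrec : ∀ n, N < n → B n = ∑ i ∈ Finset.Icc 1 k, B (n - B (n - i)))
    (hslow : ∀ n : ℕ, 1 ≤ n → (B (n + 1) : ℤ) - B n ∈ ({0, 1} : Set ℤ)) :
    k = 3 ∧ (N = 5 ∨ N = 6) ∧ ∀ C : ℕ → ℕ, IsBSeq C → ∀ n, 1 ≤ n → B n = C n := by
  have hA : B (N+1) = s17g k := by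
    rw [hrec (N+1) (by omega)]
    apply Finset.sum_congr rfl
    intro i hi
    simp only [Finset.mem_Icc] at hi
    have h1 : B (N+1-i) = N+1-i := hinit _ (by omega) (by omega)
    have h2 : N+1 - B (N+1-i) = i := by rw [h1]; omega
    rw [h2]
    exact hinit i (by omega) (by omega)
  have hA2 : s17g k = N ∨ s17g k = N + 1 := by
    have hs := hslow N (by omega)
    rw [hA, hinit N (by omega) (le_refl N)] at hs
    simp only [Set.mem_insert_iff, Set.mem_singleton_iff] at hs
    omega
  have hgkN := s17g_ge k
  have H1 : ∀ n, n ≤ s17g k → B n = n := by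
    intro n hn
    rcases Nat.eq_zero_or_pos n with rfl | hn1
    · exact hB0
    rcases hA2 with h | h
    · exact hinit n hn1 (by omega)
    · rcases Nat.lt_or_ge n (N+1) with h2 | h2
      · exact hinit n hn1 (by omega)
      · have hn2 : n = N+1 := by omega
        rw [hn2, hA]
        omega
  have H2 : ∀ n, s17g k < n → B n = ∑ i ∈ Finset.Icc 1 k, B (n - B (n - i)) := by
    intro n hn
    exact hrec n (by omega)
  obtain h2 | h3 | h4 : k = 2 ∨ k = 3 ∨ 4 ≤ k := by omega
  · exfalso
    subst h2
    have hg2 : s17g 2 = 3 := by decide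
    exact s17_key2 B (fun n hn => H1 n (by omega)) (fun n hn => H2 n (by omega)) hslow
  · subst h3
    have hg3 : s17g 3 = 6 := by decide
    have hN56 : N = 5 ∨ N = 6 := by omega
    refine ⟨rfl, hN56, ?_⟩
    have hB3 : ∀ n, 6 ≤ n → B n = B (n - B (n-1)) + B (n - B (n-2)) + B (n - B (n-3)) := by
      intro n hn
      rcases Nat.lt_or_ge N n with h | h
      · rw [hrec n h, show Finset.Icc 1 3 = {1,2,3} by decide,
          Finset.sum_insert (by decide), Finset.sum_insert (by decide), Finset.sum_singleton]
        omega
      · have hn6 : n = 6 := by omega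
        subst hn6
        have b5 : B 5 = 5 := hinit 5 (by omega) (by omega)
        have b4 : B 4 = 4 := hinit 4 (by omega) (by omega)
        have b3 : B 3 = 3 := hinit 3 (by omega) (by omega)
        have b2 : B 2 = 2 := hinit 2 (by omega) (by omega)
        have b1 : B 1 = 1 := hinit 1 (by omega) (by omega)
        have b6 : B 6 = 6 := hinit 6 (by omega) (by omega)
        norm_num [b1, b2, b3, b4, b5, b6]
    have hub : ∀ n, B n ≤ n := by
      intro n
      induction n with
      | zero => simp [hB0]
      | succ m ih =>
        rcases Nat.eq_zero_or_pos m with rfl | hm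
        · have : B 1 = 1 := hinit 1 (by omega) (by omega)
          simp [this]
        · have hs := hslow m hm
          simp only [Set.mem_insert_iff, Set.mem_singleton_iff] at hs
          omega
    have hlb : ∀ n, 1 ≤ n → 1 ≤ B n := by
      intro n
      induction n with
      | zero => intro h; omega
      | succ m ih =>
        intro _
        rcases Nat.eq_zero_or_pos m with rfl | hm
        · have : B 1 = 1 := hinit 1 (by omega) (by omega)
          simp [this]
        · have hs := hslow m hm
          simp only [Set.mem_insert_iff, Set.mem_singleton_iff] at hs
          have := ih hm
          omega
    intro C hC
    obtain ⟨hC0, hCinit, hCrec⟩ := hC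
    suffices h : ∀ n, B n = C n by exact fun n _ => h n
    intro n
    induction n using Nat.strong_induction_on with
    | _ n ih =>
      rcases Nat.eq_zero_or_pos n with rfl | hn1
      · rw [hB0, hC0]
      rcases Nat.lt_or_ge n 6 with h5 | h6
      · rw [hinit n hn1 (by omega), hCinit n hn1 (by omega)]
      · rw [hB3 n h6, hCrec n h6]
        have t : ∀ j, 1 ≤ j → j ≤ 3 → B (n - B (n-j)) = C (n - C (n-j)) := by
          intro j hj1 hj3
          have h1 : B (n-j) = C (n-j) := ih (n-j) (by omega)
          rw [← h1]
          have hl := hlb (n-j) (by omega)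
          have hu := hub (n-j)
          exact ih (n - B (n-j)) (by omega)
        rw [t 1 (by omega) (by omega), t 2 (by omega) (by omega), t 3 (by omega) (by omega)]
  · exfalso
    have hgk : s17g k = (s17g k - k) + k := by omega
    exact s17_key4 k (s17g k - k) B h4 hgk (fun n hn => H1 n (by omega))
      (fun n hn => H2 n (by omega)) hslow
end
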